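/- If S ⊆ κ is a stationary set of ordinals of countable cofinality in a regular uncountable cardinal κ, then the set S* = { x ∈ [κ]^ω : sup(x) ∈ S } is stationary in [κ]^ω. -/

import Mathlib

/-- `C` is a closed unbounded (club) subset of the ordinal `γ`. -/
def OClub (γ : Ordinal.{0}) (C : Set Ordinal.{0}) : Prop :=
  C ⊆ Set.Iio γ ∧ (∀ β < γ, ∃ c ∈ C, β < c) ∧
  ∀ δ < γ, (C ∩ Set.Iio δ).Nonempty → sSup (C ∩ Set.Iio δ) = δ → δ ∈ C

/-- `S` is a stationary subset of the ordinal `γ`: it meets every club of `γ`. -/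
def OStat (γ : Ordinal.{0}) (S : Set Ordinal.{0}) : Prop :=
  ∀ C, OClub γ C → (S ∩ C).Nonempty

/-- `S` is a stationary family of countable subsets of `B` (stationary in `[B]^ω`):
for every function `F` from finite subsets of `B` to `B` there is a countable subset of `B`
in `S` closed under `F`. -/
def FamStat (B : Set Ordinal.{0}) (S : Set (Set Ordinal.{0})) : Prop :=
  ∀ F : Finset Ordinal.{0} → Ordinal.{0}, (∀ e : Finset Ordinal.{0}, ↑e ⊆ B → F e ∈ B) →
    ∃ x ∈ S, x ⊆ B ∧ x.Countable ∧ ∀ e : Finset Ordinal.{0}, ↑e ⊆ x → F e ∈ x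



open Ordinal Cardinal Set

/-- The countable set of finsets contained in a countable set. -/
lemma countable_finset_subsets {x : Set Ordinal.{0}} (hx : x.Countable) :
    {e : Finset Ordinal.{0} | ↑e ⊆ x}.Countable := by
  have h : {e : Finset Ordinal.{0} | ↑e ⊆ x}
      = (fun e : Finset Ordinal.{0} => (↑e : Set Ordinal)) ⁻¹' {t | t.Finite ∧ t ⊆ x} := by
    ext e; simp [Finset.finite_toSet]
  rw [h]
  exact (Set.countable_setOf_finite_subset hx).preimage Finset.coe_injective

/-- For `α < κ.ord`, a bound `b < κ.ord` above `α` dominating `F` on finsets below `α`. -/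
lemma exists_bound (κ : Cardinal.{0}) (hreg : κ.IsRegular) (hunc : Cardinal.aleph0 < κ)
    (F : Finset Ordinal.{0} → Ordinal.{0})
    (hF : ∀ e : Finset Ordinal.{0}, ↑e ⊆ Set.Iio κ.ord → F e ∈ Set.Iio κ.ord)
    {α : Ordinal.{0}} (hα : α < κ.ord) :
    ∃ b, b < κ.ord ∧ α < b ∧ ∀ e : Finset Ordinal.{0}, ↑e ⊆ Set.Iio α → F e < b := by
  have hlim : Order.IsSuccLimit κ.ord := Cardinal.isSuccLimit_ord hreg.aleph0_le
  set ψ : α.ToType ≃o Set.Iio α := (Ordinal.ToType.mk (o := α)).symm with hψ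
  set G : Finset α.ToType → Ordinal.{0} := fun t => F (t.image fun i => (ψ i : Ordinal)) with hG
  have hGκ : ∀ t, G t + 1 < κ.ord := by
    intro t
    have : ↑(t.image fun i => (ψ i : Ordinal)) ⊆ Set.Iio κ.ord := by
      intro a ha
      simp only [Finset.coe_image, Set.mem_image] at ha
      obtain ⟨i, -, rfl⟩ := ha
      exact lt_trans (Set.mem_Iio.1 (ψ i).2) hα
    have := hF _ this
    rw [Ordinal.add_one_eq_succ]
    exact hlim.succ_lt this
  have hcard : #(Finset α.ToType) < κ := by
    cases finite_or_infinite α.ToType with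
    | inl h => haveI := h; haveI := Fintype.ofFinite α.ToType; exact lt_trans (Cardinal.lt_aleph0_of_finite _) hunc
    | inr h =>
      rw [Cardinal.mk_finset_of_infinite, Cardinal.mk_toType]
      exact Cardinal.lt_ord.1 hα
  have hsup : iSup (fun t => G t + 1) < κ.ord :=
    Cardinal.iSup_lt_ord_of_isRegular hreg hcard hGκ
  refine ⟨max (α + 1) (iSup fun t => G t + 1), ?_, ?_, ?_⟩
  · exact max_lt (by rw [Ordinal.add_one_eq_succ]; exact hlim.succ_lt hα) hsup
  · exact lt_of_lt_of_le (by rw [Ordinal.add_one_eq_succ]; exact Order.lt_succ α)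
      (le_max_left _ _)
  · intro e he
    set t : Finset α.ToType := e.attach.image (fun a => ψ.symm ⟨a.1, he a.2⟩) with ht
    have himg : t.image (fun i => (ψ i : Ordinal)) = e := by
      ext a
      simp only [ht, Finset.image_image, Finset.mem_image, Finset.mem_attach, true_and,
        Subtype.exists, Function.comp]
      constructor
      · rintro ⟨b, hb, rfl⟩
        simpa using hb
      · intro ha
        exact ⟨a, ha, by simp⟩
    have h1 : F e = G t := by simp only [hG]; rw [himg]
    calc F e = G t := h1
      _ < G t + 1 := by rw [Ordinal.add_one_eq_succ]; exact Order.lt_succ _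
      _ ≤ iSup (fun t => G t + 1) := Ordinal.le_iSup _ t
      _ ≤ _ := le_max_right _ _

/-- Iterated closure of the range of `s` under `F`. -/
def closureSeq (F : Finset Ordinal.{0} → Ordinal.{0}) (s : ℕ → Ordinal.{0}) :
    ℕ → Set Ordinal.{0}
  | 0 => Set.range s
  | n + 1 => closureSeq F s n ∪ F '' {e : Finset Ordinal.{0} | ↑e ⊆ closureSeq F s n}


/-- If `S` is a stationary subset of a regular uncountable cardinal `κ`
consisting of ordinals of countable cofinality, then
`S* = { x ∈ [κ]^ω : sup x ∈ S }` is stationary in `[κ]^ω`. -/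
theorem sup_preimage_stationary (κ : Cardinal.{0})
    (hreg : κ.IsRegular) (hunc : Cardinal.aleph0 < κ)
    (S : Set Ordinal.{0}) (hsub : S ⊆ Set.Iio κ.ord)
    (hcof : ∀ α ∈ S, α.cof = Cardinal.aleph0)
    (hstat : OStat κ.ord S) :
    FamStat (Set.Iio κ.ord) {x : Set Ordinal.{0} | x ⊆ Set.Iio κ.ord ∧ x.Countable ∧ sSup x ∈ S} := by
  intro F hF
  classical
  -- the club of `F`-closed ordinals below `κ.ord`
  set D : Set Ordinal.{0} :=
    {δ | δ < κ.ord ∧ ∀ e : Finset Ordinal.{0}, ↑e ⊆ Set.Iio δ → F e < δ} with hD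
  -- choice of bounds
  have hbound : ∀ α : Ordinal.{0}, ∃ b, α < b ∧ (α < κ.ord → b < κ.ord) ∧
      (α < κ.ord → ∀ e : Finset Ordinal.{0}, ↑e ⊆ Set.Iio α → F e < b) := by
    intro α
    by_cases hα : α < κ.ord
    · obtain ⟨b, hb1, hb2, hb3⟩ := exists_bound κ hreg hunc F hF hα
      exact ⟨b, hb2, fun _ => hb1, fun _ => hb3⟩
    · exact ⟨α + 1, by rw [Ordinal.add_one_eq_succ]; exact Order.lt_succ α,
        fun h => absurd h hα, fun h => absurd h hα⟩
  choose b hb1 hb2 hb3 using hbound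
  have hclub : OClub κ.ord D := by
    refine ⟨fun δ hδ => hδ.1, ?_, ?_⟩
    · -- unboundedness
      intro β hβ
      set g : ℕ → Ordinal.{0} := fun n => b^[n] (β + 1) with hg
      have hgsucc : ∀ n, g (n + 1) = b (g n) := by
        intro n; simp [hg, Function.iterate_succ_apply']
      have hgκ : ∀ n, g n < κ.ord := by
        intro n
        induction n with
        | zero =>
          show β + 1 < κ.ord
          rw [Ordinal.add_one_eq_succ]
          exact (Cardinal.isSuccLimit_ord hreg.aleph0_le).succ_lt hβ
        | succ n ih => rw [hgsucc]; exact hb2 _ ih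
      have hgmono : ∀ m n : ℕ, m ≤ n → g m ≤ g n := by
        intro m n hmn
        induction n with
        | zero => cases Nat.le_zero.1 hmn; rfl
        | succ n ih =>
          rcases Nat.lt_or_ge m (n+1) with h | h
          · exact le_trans (ih (Nat.lt_succ_iff.1 h)) (by rw [hgsucc]; exact (hb1 _).le)
          · cases le_antisymm hmn h; rfl
      refine ⟨iSup g, ⟨Cardinal.iSup_lt_ord_of_isRegular hreg
        (by rw [Cardinal.mk_nat]; exact hunc) hgκ, ?_⟩, ?_⟩
      · intro e he
        have hmem : ∀ a ∈ e, ∃ n, a < g n := by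
          intro a ha
          exact (Ordinal.lt_iSup_iff).1 (he ha)
        choose! ν hν using hmem
        set N := e.sup ν with hN
        have heN : ↑e ⊆ Set.Iio (g N) := by
          intro a ha
          exact lt_of_lt_of_le (hν a ha) (hgmono _ _ (Finset.le_sup ha))
        have : F e < g (N + 1) := by
          rw [hgsucc]
          exact hb3 _ (hgκ N) e heN
        exact lt_of_lt_of_le this (Ordinal.le_iSup g (N + 1))
      · calc β < β + 1 := by rw [Ordinal.add_one_eq_succ]; exact Order.lt_succ β
          _ = g 0 := rfl
          _ ≤ iSup g := Ordinal.le_iSup g 0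
    · -- closedness
      intro δ hδ hne hsup
      refine ⟨hδ, ?_⟩
      intro e he
      have hex : ∃ d ∈ D ∩ Set.Iio δ, ↑e ⊆ Set.Iio d := by
        rcases e.eq_empty_or_nonempty with rfl | hene
        · obtain ⟨d, hd⟩ := hne
          exact ⟨d, hd, by simp⟩
        · have hm : e.max' hene < δ := he (e.max'_mem hene)
          have : e.max' hene < sSup (D ∩ Set.Iio δ) := hm.trans_eq hsup.symm
          obtain ⟨d, hd, hlt⟩ := exists_lt_of_lt_csSup hne this
          exact ⟨d, hd, fun a ha => lt_of_le_of_lt (e.le_max' a ha) hlt⟩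
      obtain ⟨d, ⟨hdD, hdδ⟩, hed⟩ := hex
      exact lt_trans (hdD.2 e hed) hdδ
  -- pick a stationary point
  obtain ⟨δ, hδS, hδD⟩ := hstat D hclub
  have hδκ : δ < κ.ord := hδD.1
  have hδcl : ∀ e : Finset Ordinal.{0}, ↑e ⊆ Set.Iio δ → F e < δ := hδD.2
  have hδcof : δ.cof = Cardinal.aleph0 := hcof δ hδS
  have hδlim : Order.IsSuccLimit δ := Ordinal.aleph0_le_cof.1 (by rw [hδcof])
  -- a cofinal ω-sequence in δ
  have hω : δ.cof.ord = Ordinal.omega0 := by rw [hδcof, Cardinal.ord_aleph0]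
  obtain ⟨f, hf⟩ := Ordinal.exists_fundamental_sequence δ
  set s : ℕ → Ordinal.{0} := fun n => f n (by rw [hω]; exact Ordinal.nat_lt_omega0 n) with hs
  have hs1 : ∀ n, s n < δ := fun n => by
    conv_rhs => rw [← hf.2.2]
    exact Ordinal.lt_blsub f _ _
  have hs2 : ∀ β < δ, ∃ n, β ≤ s n := by
    intro β hβ
    rw [← hf.2.2] at hβ
    obtain ⟨i, hi, hle⟩ := Ordinal.lt_blsub_iff.1 hβ
    have hi' : i < Ordinal.omega0 := hω ▸ hi
    obtain ⟨n, rfl⟩ := Ordinal.lt_omega0.1 hi'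
    exact ⟨n, hle⟩
  -- the closure
  set X : ℕ → Set Ordinal.{0} := closureSeq F s with hX
  have hX0 : X 0 = Set.range s := rfl
  have hXsucc : ∀ n, X (n+1) = X n ∪ F '' {e : Finset Ordinal.{0} | ↑e ⊆ X n} := fun n => rfl
  have hXmono : ∀ m n : ℕ, m ≤ n → X m ⊆ X n := by
    intro m n hmn
    induction n with
    | zero => cases Nat.le_zero.1 hmn; exact subset_rfl
    | succ n ih =>
      rcases Nat.lt_or_ge m (n+1) with h | h
      · exact (ih (Nat.lt_succ_iff.1 h)).trans (by rw [hXsucc]; exact Set.subset_union_left)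
      · cases le_antisymm hmn h; exact subset_rfl
  have hXδ : ∀ n, X n ⊆ Set.Iio δ := by
    intro n
    induction n with
    | zero => rw [hX0]; rintro a ⟨m, rfl⟩; exact hs1 m
    | succ n ih =>
      rw [hXsucc]
      rintro a (ha | ⟨e, he, rfl⟩)
      · exact ih ha
      · exact hδcl e (fun y hy => ih (he hy))
  have hXc : ∀ n, (X n).Countable := by
    intro n
    induction n with
    | zero => rw [hX0]; exact Set.countable_range s
    | succ n ih =>
      rw [hXsucc]
      exact ih.union ((countable_finset_subsets ih).image F)
  set x : Set Ordinal.{0} := ⋃ n, X n with hx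
  have hxδ : x ⊆ Set.Iio δ := Set.iUnion_subset hXδ
  have hxne : x.Nonempty := ⟨s 0, Set.mem_iUnion.2 ⟨0, ⟨0, rfl⟩⟩⟩
  have hbdd : BddAbove x := ⟨δ, fun a ha => (hxδ ha).le⟩
  have hsmem : ∀ n, s n ∈ x := fun n => Set.mem_iUnion.2 ⟨0, ⟨n, rfl⟩⟩
  have hsupx : sSup x = δ := by
    apply le_antisymm
    · exact csSup_le hxne fun a ha => (hxδ ha).le
    · by_contra h
      push_neg at h
      have h1 : sSup x + 1 < δ := by
        rw [Ordinal.add_one_eq_succ]; exact hδlim.succ_lt h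
      obtain ⟨n, hn⟩ := hs2 _ h1
      have h2 : s n ≤ sSup x := le_csSup hbdd (hsmem n)
      have : sSup x + 1 ≤ sSup x := hn.trans h2
      rw [Ordinal.add_one_eq_succ] at this
      exact absurd this (Order.lt_succ (sSup x)).not_ge
  refine ⟨x, ⟨fun a ha => lt_trans (hxδ ha) hδκ, Set.countable_iUnion hXc, by rw [hsupx]; exact hδS⟩,
    fun a ha => lt_trans (hxδ ha) hδκ, Set.countable_iUnion hXc, ?_⟩
  intro e he
  have hmem : ∀ a ∈ e, ∃ n, a ∈ X n := fun a ha => Set.mem_iUnion.1 (he ha)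
  choose! ν hν using hmem
  set N := e.sup ν with hN
  have heN : ↑e ⊆ X N := fun a ha => hXmono _ _ (Finset.le_sup ha) (hν a ha)
  have : F e ∈ X (N + 1) := by
    rw [hXsucc]
    exact Or.inr ⟨e, heN, rfl⟩
  exact Set.mem_iUnion.2 ⟨N + 1, this⟩
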